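/- For every positive integer $n$ there exists a constant $k(n)$ such that every finite-order element of $\mathrm{GL}_n(\mathbb{Z})$ has order at most $k(n)$. -/

import Mathlib

open Matrix Finset

/-- If `d` divides every entry of `N`, then `d^m` divides every entry of `N^m`. -/
private lemma dvd_pow_entries {n : ℕ} {d : ℤ} {N : Matrix (Fin n) (Fin n) ℤ}
    (h : ∀ i j, d ∣ N i j) : ∀ m, ∀ i j, d ^ m ∣ (N ^ m) i j := by
  intro m
  induction m with
  | zero => intro i j; simp
  | succ m ih =>
    intro i j
    rw [pow_succ, pow_succ, Matrix.mul_apply]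
    exact Finset.dvd_sum fun k _ => mul_dvd_mul (ih i k) (h k j)

/-- Minkowski's key lemma (for p = 3): if every entry of `N` is divisible by 3
and `(1 + N)^q = 1` for a prime `q`, then `N = 0`. -/
private lemma minkowski_key {n : ℕ} {q : ℕ} (hq : q.Prime)
    {N : Matrix (Fin n) (Fin n) ℤ} (h3 : ∀ i j, (3 : ℤ) ∣ N i j)
    (hN : (1 + N) ^ q = 1) : N = 0 := by
  have main : ∀ k : ℕ, ∀ i j, (3 : ℤ) ^ (k + 1) ∣ N i j := by
    intro k
    induction k with
    | zero => simpa using h3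
    | succ k ih =>
      -- binomial expansion of (N + 1)^q
      have hexp := (Commute.one_right N).add_pow q
      rw [add_comm (1 : Matrix (Fin n) (Fin n) ℤ) N, hexp] at hN
      simp only [one_pow, mul_one] at hN
      rw [Finset.sum_range_succ'] at hN
      have hq1 : q - 1 + 1 = q := Nat.succ_pred_eq_of_pos hq.pos
      rw [← hq1, Finset.sum_range_succ'] at hN
      rw [hq1] at hN
      simp only [pow_zero, pow_one, Nat.choose_zero_right, Nat.cast_one,
        Nat.choose_one_right, zero_add] at hN
      have hcast : ∀ (A : Matrix (Fin n) (Fin n) ℤ) (c : ℕ),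
          A * (c : Matrix (Fin n) (Fin n) ℤ) = c • A := fun A c => by
        rw [← (Nat.cast_commute c A).eq, ← nsmul_eq_mul]
      simp only [hcast] at hN
      have hsum : (∑ m ∈ Finset.range (q - 1),
          q.choose (m + 1 + 1) • N ^ (m + 1 + 1)) + q • N = 0 := by
        have := congrArg (fun X => X - 1) hN
        simpa using this
      intro i j
      have hs := congrFun (congrFun hsum i) j
      simp only [Matrix.add_apply, Matrix.zero_apply, Matrix.sum_apply,
        Matrix.smul_apply] at hs
      simp only [nsmul_eq_mul] at hs
      -- hs : ∑ m in range (q-1), ↑(choose) * (N^(m+2)) i j + ↑q * N i j = 0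
      by_cases hq3 : q = 3
      · subst hq3
        have hdvd : (3 : ℤ) ^ (k + 3) ∣ (3 : ℤ) * N i j := by
          have h1 : ((3 : ℕ) : ℤ) * N i j =
              -(∑ m ∈ Finset.range (3 - 1),
                ((3).choose (m + 1 + 1) : ℤ) * (N ^ (m + 1 + 1)) i j) := by
            linarith [hs]
          rw [show ((3:ℕ):ℤ) = (3:ℤ) by norm_num] at h1
          rw [h1]
          apply dvd_neg.mpr
          rw [show (3:ℕ) - 1 = 2 from rfl]
          rw [Finset.sum_range_succ, Finset.sum_range_succ, Finset.sum_range_zero,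
            zero_add]
          apply dvd_add
          · -- m = 0 : choose 3 2 = 3, N^2 entries divisible by 3^(2k+2)
            have h2 := dvd_pow_entries ih 2 i j
            rw [show ((3:ℕ).choose 2 : ℤ) = 3 by norm_num]
            calc (3:ℤ)^(k+3) ∣ 3 * (3:ℤ)^(2*(k+1)) := by
                  rw [← pow_succ']; exact pow_dvd_pow 3 (by omega)
              _ ∣ 3 * (N ^ 2) i j := mul_dvd_mul_left 3 (by rwa [← pow_mul, Nat.mul_comm] at h2)
          · -- m = 1 : choose 3 3 = 1, N^3 entries divisible by 3^(3k+3)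
            have h2 := dvd_pow_entries ih 3 i j
            rw [show ((3:ℕ).choose 3 : ℤ) = 1 by norm_num, one_mul]
            rw [← pow_mul] at h2
            exact dvd_trans (pow_dvd_pow 3 (by omega)) h2
        have hdvd' : (3:ℤ) * 3 ^ (k + 2) ∣ 3 * N i j := by
          rw [← pow_succ']; exact hdvd
        exact (mul_dvd_mul_iff_left (by norm_num : (3:ℤ) ≠ 0)).mp hdvd'
      · -- q ≠ 3 : every higher term is divisible by 3^(k+2), and gcd(q,3)=1
        have hdvd : (3 : ℤ) ^ (k + 2) ∣ (q : ℤ) * N i j := by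
          have h1 : (q : ℤ) * N i j =
              -(∑ m ∈ Finset.range (q - 1),
                (q.choose (m + 1 + 1) : ℤ) * (N ^ (m + 1 + 1)) i j) := by
            linarith [hs]
          rw [h1]
          apply dvd_neg.mpr
          apply Finset.dvd_sum
          intro m _
          apply Dvd.dvd.mul_left
          have h2 := dvd_pow_entries ih (m + 1 + 1) i j
          rw [← pow_mul] at h2
          exact dvd_trans (pow_dvd_pow 3 (by nlinarith)) h2
        have hcop : IsCoprime ((3:ℤ)^(k+2)) (q : ℤ) := by
          apply IsCoprime.pow_left
          rw [Int.isCoprime_iff_gcd_eq_one]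
          have : Nat.Coprime 3 q := (Nat.coprime_primes (by norm_num) hq).mpr
            (fun h => hq3 h.symm)
          simpa [Int.gcd] using this
        exact hcop.dvd_of_dvd_mul_left hdvd
  ext i j
  rw [Matrix.zero_apply]
  by_contra ha
  have hpos : 0 < (N i j).natAbs := Int.natAbs_pos.mpr ha
  have hd : 3 ^ ((N i j).natAbs + 1) ∣ (N i j).natAbs := by
    have h1 := main ((N i j).natAbs) i j
    have h2 : ((3 : ℤ) ^ ((N i j).natAbs + 1)).natAbs ∣ (N i j).natAbs :=
      Int.natAbs_dvd_natAbs.mpr h1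
    simpa [Int.natAbs_pow] using h2
  have hle := Nat.le_of_dvd hpos hd
  have hlt : (N i j).natAbs < 3 ^ ((N i j).natAbs + 1) :=
    lt_of_lt_of_le (Nat.lt_pow_self (a := 3) (by norm_num))
      (Nat.pow_le_pow_right (by norm_num) (Nat.le_succ _))
  omega

/-- The reduction map `GL_n(ℤ) → GL_n(ℤ/3)`. -/
private def redMap (n : ℕ) : Matrix.GeneralLinearGroup (Fin n) ℤ →*
    Matrix.GeneralLinearGroup (Fin n) (ZMod 3) :=
  Units.map ((Int.castRingHom (ZMod 3)).mapMatrix).toMonoidHom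

/-- Minkowski: the kernel of reduction mod 3 is torsion-free. -/
private lemma ker_torsion_free {n : ℕ} (M : Matrix.GeneralLinearGroup (Fin n) ℤ)
    (hfin : IsOfFinOrder M) (hker : redMap n M = 1) : M = 1 := by
  by_contra hne
  have hord1 : orderOf M ≠ 1 := fun h => hne (orderOf_eq_one_iff.mp h)
  obtain ⟨q, hq, hdvd⟩ := Nat.exists_prime_and_dvd hord1
  have hord0 : orderOf M ≠ 0 := fun h => (orderOf_eq_zero_iff.mp h) hfin
  set N := M ^ (orderOf M / q) with hNdef
  have hNq : N ^ q = 1 := by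
    rw [hNdef, ← pow_mul, Nat.div_mul_cancel hdvd, pow_orderOf_eq_one]
  have hNne : N ≠ 1 := by
    intro h
    have h1 : orderOf M ∣ orderOf M / q := orderOf_dvd_of_pow_eq_one (hNdef ▸ h)
    have h2 : 0 < orderOf M / q := Nat.div_pos (Nat.le_of_dvd (Nat.pos_of_ne_zero hord0) hdvd) hq.pos
    have h3 := Nat.le_of_dvd h2 h1
    have h4 := Nat.div_lt_self (Nat.pos_of_ne_zero hord0) hq.one_lt
    omega
  have hkerN : ((Int.castRingHom (ZMod 3)).mapMatrix)
      (N : Matrix (Fin n) (Fin n) ℤ) = 1 := by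
    have h1 : redMap n N = 1 := by rw [hNdef, map_pow, hker, one_pow]
    exact Units.ext_iff.mp h1
  have h3 : ∀ i j, (3 : ℤ) ∣ ((N : Matrix (Fin n) (Fin n) ℤ) - 1) i j := by
    intro i j
    have h1 := congrFun (congrFun hkerN i) j
    rw [RingHom.mapMatrix_apply, Matrix.map_apply] at h1
    simp only [Int.coe_castRingHom] at h1
    have h2 : ((((N : Matrix (Fin n) (Fin n) ℤ) - 1) i j : ℤ) : ZMod 3) = 0 := by
      rw [Matrix.sub_apply]
      push_cast
      rw [h1]
      by_cases hij : i = j <;> simp [Matrix.one_apply, hij]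
    exact_mod_cast (ZMod.intCast_zmod_eq_zero_iff_dvd _ 3).mp h2
  have hpow : (1 + ((N : Matrix (Fin n) (Fin n) ℤ) - 1)) ^ q = 1 := by
    rw [add_sub_cancel]
    have := congrArg (Units.val) hNq
    rwa [Units.val_pow_eq_pow_val, Units.val_one] at this
  have hzero := minkowski_key hq h3 hpow
  apply hNne
  apply Units.ext
  have : (N : Matrix (Fin n) (Fin n) ℤ) - 1 = 0 := hzero
  have h5 : (N : Matrix (Fin n) (Fin n) ℤ) = 1 := by
    linear_combination (norm := (abel)) this
  simpa using h5

/-- For every positive `n` there is a constant `k n` bounding the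
order of every finite-order element of `GL_n(ℤ)`. -/
theorem stmt_1 (n : ℕ) (hn : 0 < n) :
    ∃ k : ℕ, ∀ M : Matrix.GeneralLinearGroup (Fin n) ℤ,
      IsOfFinOrder M → orderOf M ≤ k := by
  classical
  refine ⟨Fintype.card (Matrix.GeneralLinearGroup (Fin n) (ZMod 3)), ?_⟩
  intro M hM
  have hpow : redMap n M ^ Fintype.card (Matrix.GeneralLinearGroup (Fin n) (ZMod 3)) = 1 :=
    pow_card_eq_one
  have hker : redMap n (M ^ Fintype.card (Matrix.GeneralLinearGroup (Fin n) (ZMod 3))) = 1 := by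
    rw [map_pow]; exact hpow
  have h1 : M ^ Fintype.card (Matrix.GeneralLinearGroup (Fin n) (ZMod 3)) = 1 :=
    ker_torsion_free _ (hM.pow) hker
  exact Nat.le_of_dvd Fintype.card_pos (orderOf_dvd_of_pow_eq_one h1)
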